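/- Let K be a field, k ≥ 2, d ≥ 1, and let H = ([n], E) be a k-uniform hypergraph such that the Lovász–Saks–Schrijver ideal L_H^K(d) is prime. Let c ≥ 1 with k − 1 ≤ n − c, and let W be a nonempty collection of (k−1)-element subsets of [n−c] such that A ∪ {i} ∈ E for every A ∈ W and every i ∈ {n−c+1, …, n}. Then |W| + c ≤ d. -/

import Mathlib

open MvPolynomial

/-- The Lovász–Saks–Schrijver ideal `L_H^K(d)` of the hypergraph `H = ([n], E)`:
the ideal of `K[y_{ij} : i ∈ [n], j ∈ [d]]` generated by the polynomials
`f^{(d)}_e = ∑_{j=1}^d ∏_{i ∈ e} y_{ij}` for `e ∈ E`. -/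
noncomputable def lssIdeal (K : Type*) [Field K] {n : ℕ} (d : ℕ)
    (E : Finset (Finset (Fin n))) : Ideal (MvPolynomial (Fin n × Fin d) K) :=
  Ideal.span ((fun e : Finset (Fin n) => ∑ j : Fin d, ∏ i ∈ e, X (i, j)) ''
    (E : Set (Finset (Fin n))))

section LssAux


variable {K : Type*} [Field K] {n d : ℕ} {E : Finset (Finset (Fin n))}

lemma lssAux_prod_monomial_one {σ τ : Type*} (s : Finset τ) (g : τ → (σ →₀ ℕ)) :
    (∏ i ∈ s, (monomial (g i) (1 : K))) = monomial (∑ i ∈ s, g i) 1 := by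
  classical
  induction s using Finset.induction_on with
  | empty => simp
  | insert _ _ h ih => rw [Finset.prod_insert h, Finset.sum_insert h, ih, monomial_mul, one_mul]

lemma lssAux_prod_X {σ τ : Type*} (s : Finset τ) (f : τ → σ) :
    (∏ i ∈ s, (X (f i) : MvPolynomial σ K))
      = monomial (∑ i ∈ s, Finsupp.single (f i) 1) 1 := by
  rw [← lssAux_prod_monomial_one]
  refine Finset.prod_congr rfl fun i _ => ?_
  rw [← X_pow_eq_monomial, pow_one]

lemma lssAux_support {q : MvPolynomial (Fin n × Fin d) K} (hq : q ∈ lssIdeal K d E) :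
    ∀ m ∈ q.support, ∃ e ∈ E, ∃ j : Fin d, ∀ i ∈ e, m (i, j) ≠ 0 := by
  classical
  refine Submodule.span_induction ?_ ?_ ?_ ?_ hq
  · rintro x ⟨e, he, rfl⟩ m hm
    have hsub := MvPolynomial.support_sum hm
    rw [Finset.mem_biUnion] at hsub
    obtain ⟨j, -, hj⟩ := hsub
    rw [lssAux_prod_X, support_monomial, if_neg (one_ne_zero)] at hj
    rw [Finset.mem_singleton] at hj
    subst hj
    refine ⟨e, he, j, fun i hi => ?_⟩
    rw [Finsupp.finset_sum_apply]
    have : ∑ i' ∈ e, (Finsupp.single (i', j) 1) (i, j)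
        = ∑ i' ∈ e, if i' = i then 1 else 0 := by
      refine Finset.sum_congr rfl fun i' _ => ?_
      rw [Finsupp.single_apply]
      simp [Prod.ext_iff]
    rw [this, Finset.sum_ite_eq' e i (fun _ => 1), if_pos hi]
    exact one_ne_zero
  · intro m hm; simp at hm
  · intro x y _ _ hx hy m hm
    rcases Finset.mem_union.mp (MvPolynomial.support_add hm) with h | h
    · exact hx m h
    · exact hy m h
  · intro a x _ hx m hm
    rw [smul_eq_mul] at hm
    obtain ⟨b, hb, cm, hc, rfl⟩ := Finset.mem_add.mp (MvPolynomial.support_mul a x hm)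
    obtain ⟨e, he, j, hj⟩ := hx cm hc
    refine ⟨e, he, j, fun i hi => ?_⟩
    rw [Finsupp.add_apply]
    exact fun h => hj i hi (by omega)


lemma lssAux_det_not_mem
    {m' : ℕ} (R : Fin m' → Finset (Fin n)) (hR : Function.Injective R)
    (hEne : ∀ e ∈ E, e.Nonempty)
    (hER : ∀ e ∈ E, ∀ s, ¬ (e ⊆ R s))
    (κ : Fin m' → Fin d) (hκ : Function.Injective κ) :
    (Matrix.of fun s t : Fin m' =>
        ∏ i ∈ R s, (X (i, κ t) : MvPolynomial (Fin n × Fin d) K)).det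
      ∉ lssIdeal K d E := by
  classical
  set u : Equiv.Perm (Fin m') → ((Fin n × Fin d) →₀ ℕ) :=
    fun σ => ∑ s, ∑ i ∈ R (σ s), Finsupp.single (i, κ s) 1 with hu
  have hval : ∀ σ (i : Fin n) (j : Fin d),
      (u σ) (i, j) ≠ 0 ↔ ∃ t, κ t = j ∧ i ∈ R (σ t) := by
    intro σ i j
    have hrw : (u σ) (i, j)
        = ∑ s : Fin m', ∑ i' ∈ R (σ s), (Finsupp.single (i', κ s) (1:ℕ)) (i, j) := by
      rw [hu]
      rw [Finsupp.finset_sum_apply]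
      exact Finset.sum_congr rfl fun s _ => Finsupp.finset_sum_apply _ _ _
    rw [hrw]
    constructor
    · intro h
      by_contra hc
      push_neg at hc
      apply h
      refine Finset.sum_eq_zero fun s _ => Finset.sum_eq_zero fun i' hi' => ?_
      rw [Finsupp.single_apply, if_neg]
      rintro ⟨rfl, rfl⟩
      exact hc s rfl hi'
    · rintro ⟨t, rfl, hti⟩ h0
      rw [Finset.sum_eq_zero_iff] at h0
      have h1 := (Finset.sum_eq_zero_iff.mp (h0 t (Finset.mem_univ t))) i hti
      simp [Finsupp.single_apply] at h1
  have hdet : (Matrix.of fun s t : Fin m' =>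
        ∏ i ∈ R s, (X (i, κ t) : MvPolynomial (Fin n × Fin d) K)).det
      = ∑ σ : Equiv.Perm (Fin m'), Equiv.Perm.sign σ • monomial (u σ) (1:K) := by
    rw [Matrix.det_apply]
    refine Finset.sum_congr rfl fun σ _ => ?_
    congr 1
    rw [hu]
    calc (∏ s, (Matrix.of fun s t : Fin m' =>
          ∏ i ∈ R s, (X (i, κ t) : MvPolynomial (Fin n × Fin d) K)) (σ s) s)
        = ∏ s, monomial (∑ i ∈ R (σ s), Finsupp.single (i, κ s) 1) (1:K) := by
          exact Finset.prod_congr rfl fun s _ => lssAux_prod_X _ _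
      _ = _ := lssAux_prod_monomial_one _ _
  have hinj : ∀ σ : Equiv.Perm (Fin m'), u σ = u 1 → σ = 1 := by
    intro σ h
    have key : ∀ t, σ t = t := by
      intro t
      refine hR ?_
      ext i
      constructor
      · intro hi
        have h1 : (u σ) (i, κ t) ≠ 0 := (hval σ i (κ t)).mpr ⟨t, rfl, hi⟩
        rw [h] at h1
        obtain ⟨t', ht', hi'⟩ := (hval 1 i (κ t)).mp h1
        have : t' = t := hκ ht'
        subst this
        simpa using hi'
      · intro hi
        have h1 : (u 1) (i, κ t) ≠ 0 := (hval 1 i (κ t)).mpr ⟨t, rfl, by simpa using hi⟩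
        rw [← h] at h1
        obtain ⟨t', ht', hi'⟩ := (hval σ i (κ t)).mp h1
        have : t' = t := hκ ht'
        subst this
        exact hi'
    exact Equiv.ext key
  have hcoeff : coeff (u 1)
      ((Matrix.of fun s t : Fin m' =>
        ∏ i ∈ R s, (X (i, κ t) : MvPolynomial (Fin n × Fin d) K)).det) = 1 := by
    rw [hdet, coeff_sum]
    rw [Finset.sum_eq_single (1 : Equiv.Perm (Fin m'))]
    · rw [coeff_smul, coeff_monomial, if_pos rfl]
      simp
    · intro σ _ hσ
      rw [coeff_smul, coeff_monomial, if_neg fun h => hσ (hinj σ h), smul_zero]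
    · intro h; exact absurd (Finset.mem_univ _) h
  intro hmem
  have hsupp : u 1 ∈ ((Matrix.of fun s t : Fin m' =>
      ∏ i ∈ R s, (X (i, κ t) : MvPolynomial (Fin n × Fin d) K)).det).support := by
    rw [mem_support_iff, hcoeff]; exact one_ne_zero
  obtain ⟨e, he, j, hj⟩ := lssAux_support hmem (u 1) hsupp
  obtain ⟨i₀, hi₀⟩ := hEne e he
  obtain ⟨t, htj, -⟩ := (hval 1 i₀ j).mp (hj i₀ hi₀)
  refine hER e he t fun i hi => ?_
  obtain ⟨t', ht'j, ht'i⟩ := (hval 1 i j).mp (hj i hi)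
  have : t' = t := hκ (ht'j.trans htj.symm)
  subst this
  simpa using ht'i


end LssAux

set_option maxHeartbeats 2000000 in
set_option synthInstance.maxHeartbeats 400000 in
/-- Suppose the LSS-ideal `L_H^K(d)` of the `k`-uniform hypergraph `H = ([n], E)` is prime.
If `c ≥ 1`, `k - 1 ≤ n - c`, and `W` is a nonempty collection of `(k-1)`-subsets of `[n-c]`
such that `A ∪ {i} ∈ E` for all `A ∈ W` and all `i ∈ {n-c+1, …, n}` (i.e. `H` contains
`H_{W,c}`), then `|W| + c ≤ d`. -/
theorem lss_prime_forbids_H_W_c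
    (K : Type*) [Field K] (n k d c : ℕ) (hk : 2 ≤ k) (hd : 1 ≤ d) (hc : 1 ≤ c)
    (hkc : k - 1 ≤ n - c)
    (E : Finset (Finset (Fin n))) (hunif : ∀ e ∈ E, e.card = k)
    (hprime : (lssIdeal K d E).IsPrime)
    (W : Finset (Finset (Fin n))) (hW : W.Nonempty)
    (hWcard : ∀ A ∈ W, A.card = k - 1)
    (hWsub : ∀ A ∈ W, ∀ a ∈ A, (a : ℕ) < n - c)
    (hWE : ∀ A ∈ W, ∀ i : Fin n, n - c ≤ (i : ℕ) → insert i A ∈ E) :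
    W.card + c ≤ d := by
  classical
  by_contra hcon
  push_neg at hcon
  have hW1 : 1 ≤ W.card := hW.card_pos
  set w' := min W.card d with hw'def
  set c' := d + 1 - w' with hc'def
  have hw1 : 1 ≤ w' := by omega
  have hwW : w' ≤ W.card := by omega
  have hwd : w' ≤ d := by omega
  have hc1 : 1 ≤ c' := by omega
  have hcd : c' ≤ d := by omega
  have hcc : c' ≤ c := by omega
  have hsum : c' + w' = d + 1 := by omega
  have hcn : c < n := by omega
  have hEne : ∀ e ∈ E, e.Nonempty := fun e he =>
    Finset.card_pos.mp (by rw [hunif e he]; omega)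
  -- the quotient ring and fraction field
  set I := lssIdeal K d E with hI
  haveI : IsDomain (MvPolynomial (Fin n × Fin d) K ⧸ I) :=
    (Ideal.Quotient.isDomain_iff_prime I).mpr hprime
  set F := FractionRing (MvPolynomial (Fin n × Fin d) K ⧸ I) with hF
  let π : MvPolynomial (Fin n × Fin d) K →+* F :=
    (algebraMap (MvPolynomial (Fin n × Fin d) K ⧸ I) F).comp (Ideal.Quotient.mk I)
  have hπ : ∀ q, π q = 0 ↔ q ∈ I := by
    intro q
    simp only [π, RingHom.comp_apply]
    rw [IsFractionRing.to_map_eq_zero_iff, Ideal.Quotient.eq_zero_iff_mem]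
  -- rows
  let ι : Fin c' → Fin n := fun s => ⟨n - c' + s, by have := s.is_lt; omega⟩
  have hιinj : Function.Injective ι := by
    intro a b h
    have h2 : n - c' + (a : ℕ) = n - c' + (b : ℕ) := congrArg Fin.val h
    exact Fin.ext (by omega)
  have hιtop : ∀ s, n - c ≤ ((ι s : Fin n) : ℕ) := fun s => by
    show n - c ≤ n - c' + (s : ℕ); omega
  let α : Fin w' → Finset (Fin n) := fun t =>
    (W.equivFin.symm ⟨(t : ℕ), by have := t.is_lt; omega⟩ : {x // x ∈ W})
  have hαW : ∀ t, α t ∈ W := fun t => (W.equivFin.symm _).2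
  have hαinj : Function.Injective α := by
    intro a b h
    have h2 := W.equivFin.symm.injective (Subtype.coe_injective h)
    have h3 : (a : ℕ) = (b : ℕ) := by simpa using congrArg Fin.val h2
    exact Fin.ext h3
  -- matrices over F
  let A : Matrix (Fin c') (Fin d) F := Matrix.of fun s j => π (X (ι s, j))
  let B : Matrix (Fin w') (Fin d) F := Matrix.of fun t j => π (∏ a ∈ α t, X (a, j))
  have hfmem : ∀ e ∈ E, (∑ j : Fin d, ∏ i ∈ e, (X (i, j) : MvPolynomial (Fin n × Fin d) K)) ∈ I :=
    fun e he => Ideal.subset_span ⟨e, he, rfl⟩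
  have hAB : A * B.transpose = 0 := by
    ext s t
    have hnotmem : ι s ∉ α t := fun hmem =>
      absurd (hWsub _ (hαW t) _ hmem) (by have := hιtop s; omega)
    have he : insert (ι s) (α t) ∈ E := hWE _ (hαW t) _ (hιtop s)
    have hrw : (A * B.transpose) s t
        = π (∑ j : Fin d, ∏ i ∈ insert (ι s) (α t), X (i, j)) := by
      rw [map_sum, Matrix.mul_apply]
      refine Finset.sum_congr rfl fun j _ => ?_
      rw [Finset.prod_insert hnotmem, map_mul]
      rfl
    rw [hrw, (hπ _).mpr (hfmem _ he)]
    simp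
  -- linear independence of rows of A
  have hdetA : (Matrix.of fun s t : Fin c' =>
      ∏ i ∈ ({ι s} : Finset (Fin n)), (X (i, Fin.castLE hcd t) : MvPolynomial (Fin n × Fin d) K)).det
      ∉ I := by
    refine lssAux_det_not_mem (fun s => {ι s})
      (fun a b h => hιinj (Finset.singleton_injective h)) hEne
      (fun e he s hsub => ?_) _ (Fin.castLE_injective hcd)
    have := Finset.card_le_card hsub
    rw [hunif e he, Finset.card_singleton] at this
    omega
  have hA : LinearIndependent F (fun s => A s) := by
    have hsub : LinearIndependent F (fun s => (A.submatrix id (Fin.castLE hcd)) s) := by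
      show LinearIndependent F (A.submatrix id (Fin.castLE hcd)).row
      rw [Matrix.linearIndependent_rows_iff_isUnit, Matrix.isUnit_iff_isUnit_det,
        isUnit_iff_ne_zero]
      have hrw : (A.submatrix id (Fin.castLE hcd)).det
          = π ((Matrix.of fun s t : Fin c' =>
            ∏ i ∈ ({ι s} : Finset (Fin n)),
              (X (i, Fin.castLE hcd t) : MvPolynomial (Fin n × Fin d) K)).det) := by
        rw [RingHom.map_det]
        congr 1
        ext s t
        simp [A, Finset.prod_singleton]
      rw [hrw]
      exact fun h0 => hdetA ((hπ _).mp h0)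
    have heq : (⇑(LinearMap.funLeft F F (Fin.castLE hcd)) ∘ fun s => A s)
        = fun s => (A.submatrix id (Fin.castLE hcd)) s := rfl
    exact LinearIndependent.of_comp (LinearMap.funLeft F F (Fin.castLE hcd)) (heq ▸ hsub)
  -- linear independence of rows of B
  have hdetB : (Matrix.of fun s t : Fin w' =>
      ∏ i ∈ α s, (X (i, Fin.castLE hwd t) : MvPolynomial (Fin n × Fin d) K)).det
      ∉ I := by
    refine lssAux_det_not_mem α hαinj hEne (fun e he s hsub => ?_) _ (Fin.castLE_injective hwd)
    have := Finset.card_le_card hsub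
    rw [hunif e he, hWcard _ (hαW s)] at this
    omega
  have hB : LinearIndependent F (fun t => B t) := by
    have hsub : LinearIndependent F (fun t => (B.submatrix id (Fin.castLE hwd)) t) := by
      show LinearIndependent F (B.submatrix id (Fin.castLE hwd)).row
      rw [Matrix.linearIndependent_rows_iff_isUnit, Matrix.isUnit_iff_isUnit_det,
        isUnit_iff_ne_zero]
      have hrw : (B.submatrix id (Fin.castLE hwd)).det
          = π ((Matrix.of fun s t : Fin w' =>
            ∏ i ∈ α s, (X (i, Fin.castLE hwd t) : MvPolynomial (Fin n × Fin d) K)).det) := by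
        rw [RingHom.map_det]
        congr 1
      rw [hrw]
      exact fun h0 => hdetB ((hπ _).mp h0)
    have heq : (⇑(LinearMap.funLeft F F (Fin.castLE hwd)) ∘ fun t => B t)
        = fun t => (B.submatrix id (Fin.castLE hwd)) t := rfl
    exact LinearIndependent.of_comp (LinearMap.funLeft F F (Fin.castLE hwd)) (heq ▸ hsub)
  -- rank argument
  have hrA : A.rank = c' := by rw [hA.rank_matrix, Fintype.card_fin]
  have hrB : B.rank = w' := by rw [hB.rank_matrix, Fintype.card_fin]
  have hle := Matrix.rank_add_rank_le_card_of_mul_eq_zero hAB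
  rw [Matrix.rank_transpose, hrA, hrB, Fintype.card_fin] at hle
  omega
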